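/- Let g : ℝ → ℝ be convex on [0, ∞) with g(t) ≤ ℓ·t for all t ≥ 0, where ℓ ≥ 0. Then g_∞ := lim_{t → +∞} g(t)/t exists, is finite, and satisfies g_∞ ≤ ℓ. Moreover, for every real normed space E and every L, M ∈ E, lim_{t → +∞} ( g(‖L + t·M‖) − g(‖L‖) ) / t = g_∞ · ‖M‖. -/

import Mathlib

open Filter

theorem stmt_10 (g : ℝ → ℝ) (ℓ : ℝ) (hℓ : 0 ≤ ℓ)
    (hconv : ConvexOn ℝ (Set.Ici 0) g)
    (hle : ∀ t : ℝ, 0 ≤ t → g t ≤ ℓ * t)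
    (E : Type*) [NormedAddCommGroup E] [NormedSpace ℝ E] (L M : E) :
    ∃ ginf : ℝ,
      Filter.Tendsto (fun t : ℝ => g t / t) Filter.atTop (nhds ginf) ∧
      ginf ≤ ℓ ∧
      Filter.Tendsto (fun t : ℝ => (g ‖L + t • M‖ - g ‖L‖) / t) Filter.atTop
        (nhds (ginf * ‖M‖)) := by
  set s : ℝ → ℝ := fun t => (g (max t 2) - g 1) / (max t 2 - 1) with hs_def
  have hmono : Monotone s := by
    intro a b hab
    have h2a : (2:ℝ) ≤ max a 2 := le_max_right _ _
    have h2b : (2:ℝ) ≤ max b 2 := le_max_right _ _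
    exact hconv.secant_mono (by norm_num) (by simp only [Set.mem_Ici]; linarith)
      (by simp only [Set.mem_Ici]; linarith) (by intro h; rw [h] at h2a; linarith)
      (by intro h; rw [h] at h2b; linarith) (max_le_max hab le_rfl)
  have hbdd : BddAbove (Set.range s) := by
    refine ⟨ℓ + |ℓ - g 1|, ?_⟩
    rintro _ ⟨t, rfl⟩
    have h2 : (2:ℝ) ≤ max t 2 := le_max_right _ _
    have hu1 : (1:ℝ) ≤ max t 2 - 1 := by linarith
    have hu0 : (0:ℝ) < max t 2 - 1 := by linarith
    have hgu : g (max t 2) ≤ ℓ * max t 2 := hle _ (by linarith)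
    have key : g (max t 2) - g 1 ≤ ℓ * (max t 2 - 1) + (ℓ - g 1) := by ring_nf; linarith
    calc s t ≤ (ℓ * (max t 2 - 1) + (ℓ - g 1)) / (max t 2 - 1) := by
          exact div_le_div_of_nonneg_right key hu0.le
      _ = ℓ + (ℓ - g 1) / (max t 2 - 1) := by field_simp
      _ ≤ ℓ + |ℓ - g 1| := by
          gcongr
          calc (ℓ - g 1) / (max t 2 - 1) ≤ |ℓ - g 1| / (max t 2 - 1) :=
                div_le_div_of_nonneg_right (le_abs_self _) hu0.le
            _ ≤ |ℓ - g 1| / 1 :=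
                div_le_div_of_nonneg_left (abs_nonneg _) one_pos hu1
            _ = |ℓ - g 1| := div_one _
  set ginf : ℝ := ⨆ t, s t with hg_def
  have hs_tendsto : Tendsto s atTop (nhds ginf) := tendsto_atTop_ciSup hmono hbdd
  have hinv : Tendsto (fun t : ℝ => t⁻¹) atTop (nhds 0) := tendsto_inv_atTop_zero
  have h1 : Tendsto (fun t : ℝ => g t / t) atTop (nhds ginf) := by
    have hform : Tendsto (fun t : ℝ => s t * ((t - 1) / t) + g 1 * t⁻¹) atTop
        (nhds (ginf * 1 + g 1 * 0)) := by
      refine Tendsto.add (hs_tendsto.mul ?_) (tendsto_const_nhds.mul hinv)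
      have h10 : Tendsto (fun t : ℝ => 1 - t⁻¹) atTop (nhds 1) := by
        simpa using (tendsto_const_nhds (x := (1:ℝ))).sub hinv
      refine h10.congr' ?_
      filter_upwards [eventually_gt_atTop (0:ℝ)] with t ht
      field_simp
    rw [mul_one, mul_zero, add_zero] at hform
    refine hform.congr' ?_
    filter_upwards [eventually_ge_atTop (2:ℝ)] with t ht
    have hmax : max t 2 = t := max_eq_left ht
    have ht0 : t ≠ 0 := by linarith
    have ht1 : t - 1 ≠ 0 := by intro h; nlinarith
    simp only [hs_def, hmax]
    field_simp
    ring
  have h2 : ginf ≤ ℓ := by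
    refine le_of_tendsto h1 ?_
    filter_upwards [eventually_gt_atTop (0:ℝ)] with t ht
    rw [div_le_iff₀ ht]
    linarith [hle t ht.le]
  refine ⟨ginf, h1, h2, ?_⟩
  by_cases hM : M = 0
  · subst hM
    simp only [smul_zero, add_zero, sub_self, zero_div, norm_zero, mul_zero]
    exact tendsto_const_nhds
  · have hM0 : 0 < ‖M‖ := norm_pos_iff.mpr hM
    set a : ℝ → ℝ := fun t => ‖L + t • M‖ with ha_def
    have hdiff : ∀ t : ℝ, 0 ≤ t → |a t - t * ‖M‖| ≤ ‖L‖ := by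
      intro t ht
      have h' := abs_norm_sub_norm_le (L + t • M) (t • M)
      simp only [add_sub_cancel_right, norm_smul, Real.norm_eq_abs, abs_of_nonneg ht] at h'
      simpa [ha_def] using h'
    have hlow : ∀ t : ℝ, 0 ≤ t → t * ‖M‖ - ‖L‖ ≤ a t := by
      intro t ht
      have := abs_le.mp (hdiff t ht)
      linarith [this.1]
    have ha_top : Tendsto a atTop atTop := by
      refine tendsto_atTop_mono' _ (f₁ := fun t => t * ‖M‖ - ‖L‖) ?_ ?_
      · filter_upwards [eventually_ge_atTop (0:ℝ)] with t ht using hlow t ht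
      · exact (tendsto_id.atTop_mul_const hM0).atTop_add tendsto_const_nhds
    have hratio : Tendsto (fun t : ℝ => a t / t) atTop (nhds ‖M‖) := by
      have hz : Tendsto (fun t : ℝ => a t / t - ‖M‖) atTop (nhds 0) := by
        have hb : ∀ᶠ t : ℝ in atTop, ‖a t / t - ‖M‖‖ ≤ ‖L‖ * t⁻¹ := by
          filter_upwards [eventually_gt_atTop (0:ℝ)] with t ht
          have : a t / t - ‖M‖ = (a t - t * ‖M‖) / t := by field_simp
          rw [Real.norm_eq_abs, this, abs_div, abs_of_pos ht, mul_comm ‖L‖ t⁻¹,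
            ← div_eq_inv_mul]
          exact div_le_div_of_nonneg_right (hdiff t ht.le) ht.le
        exact squeeze_zero_norm' hb (by simpa using (tendsto_const_nhds (x := ‖L‖)).mul hinv)
      have := hz.add (tendsto_const_nhds (x := ‖M‖))
      simpa using this
    have hcomp : Tendsto (fun t : ℝ => g (a t) / a t) atTop (nhds ginf) := h1.comp ha_top
    have hfinal : Tendsto (fun t : ℝ => g (a t) / a t * (a t / t) - g ‖L‖ * t⁻¹) atTop
        (nhds (ginf * ‖M‖ - g ‖L‖ * 0)) :=
      (hcomp.mul hratio).sub (tendsto_const_nhds.mul hinv)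
    rw [mul_zero, sub_zero] at hfinal
    refine hfinal.congr' ?_
    filter_upwards [eventually_gt_atTop (0:ℝ), ha_top.eventually (eventually_gt_atTop (0:ℝ))]
      with t ht hat
    have ht0 : t ≠ 0 := ht.ne'
    have hat0 : a t ≠ 0 := hat.ne'
    simp only [ha_def] at hat0 ⊢
    field_simp
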